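/- For every n ≥ 1 and m ≥ 1: P(ξ̃_{α_n} = 1) = P(ξ̃_{α_n} = −1) = P(ξ̃_{β_m} = 1) = P(ξ̃_{β_m} = −1) = 1/2. -/

import Mathlib

open MeasureTheory ProbabilityTheory Filter Set

noncomputable section

variable {Ω : Type*}

/-- `Q n = 1` if the `n`-th moves agree, `0` if they are opposite. -/
def Qproc (ξ η : ℕ → Ω → ℝ) (n : ℕ) (ω : Ω) : ℕ :=
  if ξ n ω = η n ω then 1 else 0

/-- `T n = ∑_{k=1}^n Q k`, the number of common movements up to step `n`. -/
def Tproc (ξ η : ℕ → Ω → ℝ) (n : ℕ) (ω : Ω) : ℕ :=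
  ∑ k ∈ Finset.Icc 1 n, Qproc ξ η k ω

/-- `S n = n - T n`, the number of counter movements up to step `n`. -/
def Sproc (ξ η : ℕ → Ω → ℝ) (n : ℕ) (ω : Ω) : ℕ :=
  n - Tproc ξ η n ω

/-- `α n = inf {k ≥ 1 : T k = n}`, with `inf ∅ = ⊤`, valued in `ℕ∞`. -/
def alphaProc (ξ η : ℕ → Ω → ℝ) (n : ℕ) (ω : Ω) : ℕ∞ :=
  ⨅ (k : ℕ) (_ : 1 ≤ k ∧ Tproc ξ η k ω = n), (k : ℕ∞)

/-- `β n = inf {k ≥ 1 : S k = n}`, with `inf ∅ = ⊤`, valued in `ℕ∞`. -/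
def betaProc (ξ η : ℕ → Ω → ℝ) (n : ℕ) (ω : Ω) : ℕ∞ :=
  ⨅ (k : ℕ) (_ : 1 ≤ k ∧ Sproc ξ η k ω = n), (k : ℕ∞)

/-- `ξ̃_{α n}`: equal to `ξ_i` on `{α n = i}` (`i < ∞`) and to `ζ n` on `{α n = ∞}`. -/
def xiAlpha (ξ η ζ : ℕ → Ω → ℝ) (n : ℕ) (ω : Ω) : ℝ :=
  if alphaProc ξ η n ω = ⊤ then ζ n ω else ξ (alphaProc ξ η n ω).toNat ω

/-- `ξ̃_{β m}`: equal to `ξ_i` on `{β m = i}` (`i < ∞`) and to `ψ m` on `{β m = ∞}`. -/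
def xiBeta (ξ η ψ : ℕ → Ω → ℝ) (m : ℕ) (ω : Ω) : ℝ :=
  if betaProc ξ η m ω = ⊤ then ψ m ω else ξ (betaProc ξ η m ω).toNat ω

/-- The common-movement walk `X n = ∑_{i=1}^n ξ̃_{α i}`. -/
def Xproc (ξ η ζ : ℕ → Ω → ℝ) (n : ℕ) (ω : Ω) : ℝ :=
  ∑ i ∈ Finset.Icc 1 n, xiAlpha ξ η ζ i ω

/-- The counter-movement walk `Y n = ∑_{i=1}^n ξ̃_{β i}`. -/
def Yproc (ξ η ψ : ℕ → Ω → ℝ) (n : ℕ) (ω : Ω) : ℝ :=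
  ∑ i ∈ Finset.Icc 1 n, xiBeta ξ η ψ i ω



/-- generic hitting time inf equals Nat.find when nonempty -/
lemma hitInf_eq (N : ℕ → ℕ) (n : ℕ) (hex : ∃ k, 1 ≤ k ∧ N k = n) :
    (⨅ (k : ℕ) (_ : 1 ≤ k ∧ N k = n), (k : ℕ∞)) = (Nat.find hex : ℕ∞) := by
  refine le_antisymm (iInf₂_le (Nat.find hex) (Nat.find_spec hex)) (le_iInf₂ fun k hk => ?_)
  exact_mod_cast Nat.find_min' hex hk

lemma hitInf_eq_top (N : ℕ → ℕ) (n : ℕ) (hex : ¬ ∃ k, 1 ≤ k ∧ N k = n) :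
    (⨅ (k : ℕ) (_ : 1 ≤ k ∧ N k = n), (k : ℕ∞)) = ⊤ := by
  push_neg at hex
  simp only [iInf_eq_top]
  intro k hk
  exact absurd hk.2 (hex k hk.1)

lemma hitInf_ne_zero (N : ℕ → ℕ) (n : ℕ) :
    (⨅ (k : ℕ) (_ : 1 ≤ k ∧ N k = n), (k : ℕ∞)) ≠ 0 := by
  by_cases hex : ∃ k, 1 ≤ k ∧ N k = n
  · rw [hitInf_eq N n hex]
    have h1 := (Nat.find_spec hex).1
    intro h
    have : Nat.find hex = 0 := by exact_mod_cast h
    omega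
  · rw [hitInf_eq_top N n hex]; simp

lemma hitInf_char (N : ℕ → ℕ) (h0 : N 0 = 0)
    (hstep : ∀ i, N (i+1) = N i ∨ N (i+1) = N i + 1)
    (n i : ℕ) (hn : 1 ≤ n) (hi : 1 ≤ i) :
    (⨅ (k : ℕ) (_ : 1 ≤ k ∧ N k = n), (k : ℕ∞)) = (i : ℕ∞) ↔
      (N (i-1) = n - 1 ∧ N i = N (i-1) + 1) := by
  have hmono : Monotone N := monotone_nat_of_le_succ (fun j => by rcases hstep j with h|h <;> omega)
  constructor
  · intro h
    by_cases hex : ∃ k, 1 ≤ k ∧ N k = n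
    · rw [hitInf_eq N n hex] at h
      have hif : i = Nat.find hex := by exact_mod_cast h.symm
      have hspec := Nat.find_spec hex
      rw [← hif] at hspec
      have hNi : N i = n := hspec.2
      have hstep' := hstep (i-1)
      have hi1 : i - 1 + 1 = i := by omega
      rw [hi1] at hstep'
      rcases hstep' with hc | hc
      · exfalso
        by_cases h1 : 1 ≤ i - 1
        · have := Nat.find_min hex (m := i - 1) (by omega)
          exact this ⟨h1, by omega⟩
        · have : i = 1 := by omega
          subst this
          simp at hc
          omega
      · exact ⟨by omega, hc⟩
    · rw [hitInf_eq_top N n hex] at h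
      exact absurd h.symm (by simp)
  · rintro ⟨h1, h2⟩
    have hNi : N i = n := by omega
    refine le_antisymm (iInf₂_le i ⟨hi, hNi⟩) (le_iInf₂ fun k hk => ?_)
    have : i ≤ k := by
      by_contra hlt
      push_neg at hlt
      have : N k ≤ N (i-1) := hmono (by omega)
      omega
    exact_mod_cast this

lemma hitInf_top_iff (N : ℕ → ℕ) (n : ℕ) :
    (⨅ (k : ℕ) (_ : 1 ≤ k ∧ N k = n), (k : ℕ∞)) = ⊤ ↔ ¬ ∃ k, 1 ≤ k ∧ N k = n := by
  constructor
  · intro h hex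
    rw [hitInf_eq N n hex] at h
    exact absurd h (by simp)
  · exact hitInf_eq_top N n

section procs
variable (ξ η : ℕ → Ω → ℝ)

lemma Tproc_zero (ω : Ω) : Tproc ξ η 0 ω = 0 := by simp [Tproc]

lemma Tproc_succ (i : ℕ) (ω : Ω) :
    Tproc ξ η (i+1) ω = Tproc ξ η i ω + Qproc ξ η (i+1) ω := by
  simp [Tproc, Finset.sum_Icc_succ_top (Nat.le_add_left 1 i)]

lemma Qproc_le_one (i : ℕ) (ω : Ω) : Qproc ξ η i ω ≤ 1 := by
  unfold Qproc; split <;> simp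

lemma Tproc_le (i : ℕ) (ω : Ω) : Tproc ξ η i ω ≤ i := by
  induction i with
  | zero => simp [Tproc_zero]
  | succ k ih =>
    rw [Tproc_succ]
    have := Qproc_le_one ξ η (k+1) ω
    omega

lemma Sproc_zero (ω : Ω) : Sproc ξ η 0 ω = 0 := by simp [Sproc, Tproc_zero]

lemma Sproc_succ (i : ℕ) (ω : Ω) :
    Sproc ξ η (i+1) ω = Sproc ξ η i ω + (1 - Qproc ξ η (i+1) ω) := by
  have h1 := Tproc_succ ξ η i ω
  have h2 := Tproc_le ξ η i ω
  have h3 := Qproc_le_one ξ η (i+1) ω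
  simp only [Sproc]
  omega

lemma alpha_char (n i : ℕ) (hn : 1 ≤ n) (hi : 1 ≤ i) (ω : Ω) :
    alphaProc ξ η n ω = (i : ℕ∞) ↔
      (Tproc ξ η (i-1) ω = n - 1 ∧ ξ i ω = η i ω) := by
  have hstep : ∀ j, Tproc ξ η (j+1) ω = Tproc ξ η j ω ∨
      Tproc ξ η (j+1) ω = Tproc ξ η j ω + 1 := by
    intro j
    rw [Tproc_succ]
    rcases Nat.le_one_iff_eq_zero_or_eq_one.mp (Qproc_le_one ξ η (j+1) ω) with h|h <;>
      rw [h] <;> simp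
  rw [show alphaProc ξ η n ω = ⨅ (k : ℕ) (_ : 1 ≤ k ∧ (fun j => Tproc ξ η j ω) k = n), (k : ℕ∞) from rfl,
    hitInf_char (fun j => Tproc ξ η j ω) (Tproc_zero ξ η ω) hstep n i hn hi]
  have hi1 : i - 1 + 1 = i := by omega
  have hTs : Tproc ξ η i ω = Tproc ξ η (i-1) ω + Qproc ξ η i ω := by
    conv_lhs => rw [← hi1, Tproc_succ, hi1]
  constructor
  · rintro ⟨h1, h2⟩
    refine ⟨h1, ?_⟩
    have : Qproc ξ η i ω = 1 := by omega
    by_contra hne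
    simp [Qproc, hne] at this
  · rintro ⟨h1, h2⟩
    refine ⟨h1, ?_⟩
    have : Qproc ξ η i ω = 1 := by simp [Qproc, h2]
    omega

lemma beta_char (n i : ℕ) (hn : 1 ≤ n) (hi : 1 ≤ i) (ω : Ω) :
    betaProc ξ η n ω = (i : ℕ∞) ↔
      (Sproc ξ η (i-1) ω = n - 1 ∧ ξ i ω ≠ η i ω) := by
  have hstep : ∀ j, Sproc ξ η (j+1) ω = Sproc ξ η j ω ∨
      Sproc ξ η (j+1) ω = Sproc ξ η j ω + 1 := by
    intro j
    rw [Sproc_succ]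
    rcases Nat.le_one_iff_eq_zero_or_eq_one.mp (Qproc_le_one ξ η (j+1) ω) with h|h <;>
      rw [h] <;> simp
  rw [show betaProc ξ η n ω = ⨅ (k : ℕ) (_ : 1 ≤ k ∧ (fun j => Sproc ξ η j ω) k = n), (k : ℕ∞) from rfl,
    hitInf_char (fun j => Sproc ξ η j ω) (Sproc_zero ξ η ω) hstep n i hn hi]
  have hi1 : i - 1 + 1 = i := by omega
  have hSs : Sproc ξ η i ω = Sproc ξ η (i-1) ω + (1 - Qproc ξ η i ω) := by
    conv_lhs => rw [← hi1, Sproc_succ, hi1]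
  have hQ1 := Qproc_le_one ξ η i ω
  constructor
  · rintro ⟨h1, h2⟩
    refine ⟨h1, ?_⟩
    have : Qproc ξ η i ω = 0 := by omega
    intro heq
    simp [Qproc, heq] at this
  · rintro ⟨h1, h2⟩
    refine ⟨h1, ?_⟩
    have : Qproc ξ η i ω = 0 := by simp [Qproc, h2]
    omega

lemma alpha_ne_zero (n : ℕ) (ω : Ω) : alphaProc ξ η n ω ≠ 0 :=
  hitInf_ne_zero (fun j => Tproc ξ η j ω) n

lemma beta_ne_zero (n : ℕ) (ω : Ω) : betaProc ξ η n ω ≠ 0 :=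
  hitInf_ne_zero (fun j => Sproc ξ η j ω) n

end procs


section measureAux
variable {Ω : Type*} [mΩ : MeasurableSpace Ω]

lemma half_inter (P : Measure Ω) [IsProbabilityMeasure P]
    (F : MeasureTheory.Filtration ℕ mΩ) (j : ℕ) {A S : Set Ω}
    (hA : MeasurableSet[F j] A) (hS : MeasurableSet S)
    (hc : P[S.indicator (fun _ => (1:ℝ)) | F j] =ᵐ[P] fun _ => 1 / 2) :
    P (A ∩ S) = P A * 2⁻¹ := by
  have hm : (F j : MeasurableSpace Ω) ≤ mΩ := F.le j
  have hA' : MeasurableSet A := hm _ hA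
  have hint : Integrable (S.indicator fun _ => (1:ℝ)) P :=
    (integrable_const 1).indicator hS
  have h1 := setIntegral_condExp hm hint hA
  have h2 : ∫ x in A, (P[S.indicator (fun _ => (1:ℝ)) | F j]) x ∂P
      = ∫ x in A, (fun _ => (1:ℝ) / 2) x ∂P :=
    integral_congr_ae (ae_restrict_of_ae hc)
  have h3 : ∫ x in A, S.indicator (fun _ => (1:ℝ)) x ∂P = (P (A ∩ S)).toReal := by
    rw [setIntegral_indicator hS]
    simp [Measure.restrict_apply hS, Set.inter_comm S A, measureReal_def]
  have h4 : ∫ x in A, (fun _ => (1:ℝ) / 2) x ∂P = (P A).toReal * (1 / 2) := by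
    rw [setIntegral_const]
    simp [smul_eq_mul, measureReal_def]
  have hkey : (P (A ∩ S)).toReal = (P A * 2⁻¹).toReal := by
    rw [← h3, ← h1, h2, h4, ENNReal.toReal_mul]
    norm_num
  exact (ENNReal.toReal_eq_toReal_iff' (measure_ne_top P _)
    (ENNReal.mul_ne_top (measure_ne_top P _) (by norm_num))).mp hkey

lemma key_eq (P : Measure Ω) [IsProbabilityMeasure P]
    (F : MeasureTheory.Filtration ℕ mΩ)
    (ξ η : ℕ → Ω → ℝ)
    (hξm : ∀ n, 1 ≤ n → Measurable[F n] (ξ n))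
    (hηm : ∀ n, 1 ≤ n → Measurable[F n] (η n))
    (hξv : ∀ n ω, ξ n ω = 1 ∨ ξ n ω = -1)
    (hηv : ∀ n ω, η n ω = 1 ∨ η n ω = -1)
    (hhalf : ∀ n, 1 ≤ n →
      (P[({ω | ξ n ω = 1}).indicator (fun _ => (1 : ℝ)) | F (n - 1)] =ᵐ[P] fun _ => 1 / 2) ∧
      (P[({ω | ξ n ω = -1}).indicator (fun _ => (1 : ℝ)) | F (n - 1)] =ᵐ[P] fun _ => 1 / 2) ∧
      (P[({ω | η n ω = 1}).indicator (fun _ => (1 : ℝ)) | F (n - 1)] =ᵐ[P] fun _ => 1 / 2) ∧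
      (P[({ω | η n ω = -1}).indicator (fun _ => (1 : ℝ)) | F (n - 1)] =ᵐ[P] fun _ => 1 / 2))
    (i : ℕ) (hi : 1 ≤ i) {A : Set Ω} (hA : MeasurableSet[F (i-1)] A)
    (e : ℝ) (he : e = 1 ∨ e = -1) :
    P (A ∩ {ω | ξ i ω = 1 ∧ η i ω = e}) = P (A ∩ {ω | ξ i ω = -1 ∧ η i ω = -e}) := by
  have hA' : MeasurableSet A := F.le (i-1) _ hA
  have hmξ : Measurable (ξ i) := (hξm i hi).mono (F.le i) le_rfl
  have hmη : Measurable (η i) := (hηm i hi).mono (F.le i) le_rfl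
  have hS : ∀ c : ℝ, MeasurableSet {ω | ξ i ω = c} := fun c =>
    hmξ (measurableSet_singleton c)
  have hSη : ∀ c : ℝ, MeasurableSet {ω | η i ω = c} := fun c =>
    hmη (measurableSet_singleton c)
  have hene : e ≠ -e := by rcases he with h|h <;> subst h <;> norm_num
  -- split A ∩ {ξ = 1} by the value of η
  have hsplit1 : P (A ∩ {ω | ξ i ω = 1}) =
      P (A ∩ {ω | ξ i ω = 1 ∧ η i ω = e}) + P (A ∩ {ω | ξ i ω = 1 ∧ η i ω = -e}) := by
    have hu : A ∩ {ω | ξ i ω = 1} =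
        (A ∩ {ω | ξ i ω = 1 ∧ η i ω = e}) ∪ (A ∩ {ω | ξ i ω = 1 ∧ η i ω = -e}) := by
      ext ω
      simp only [Set.mem_inter_iff, Set.mem_setOf_eq, Set.mem_union]
      constructor
      · rintro ⟨hA1, hx⟩
        rcases hηv i ω with h|h <;> rcases he with h'|h' <;> subst h' <;>
          simp [hA1, hx, h]
      · rintro (⟨hA1, hx, _⟩|⟨hA1, hx, _⟩) <;> exact ⟨hA1, hx⟩
    rw [hu, measure_union]
    · exact Set.disjoint_left.mpr (fun ω h1 h2 => hene (h1.2.2.symm.trans h2.2.2))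
    · exact hA'.inter ((hS 1).inter (hSη (-e)))
  have hsplit2 : P (A ∩ {ω | η i ω = -e}) =
      P (A ∩ {ω | ξ i ω = 1 ∧ η i ω = -e}) + P (A ∩ {ω | ξ i ω = -1 ∧ η i ω = -e}) := by
    have hu : A ∩ {ω | η i ω = -e} =
        (A ∩ {ω | ξ i ω = 1 ∧ η i ω = -e}) ∪ (A ∩ {ω | ξ i ω = -1 ∧ η i ω = -e}) := by
      ext ω
      simp only [Set.mem_inter_iff, Set.mem_setOf_eq, Set.mem_union]
      constructor
      · rintro ⟨hA1, hx⟩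
        rcases hξv i ω with h|h <;> simp [hA1, hx, h]
      · rintro (⟨hA1, _, hx⟩|⟨hA1, _, hx⟩) <;> exact ⟨hA1, hx⟩
    rw [hu, measure_union]
    · exact Set.disjoint_left.mpr (fun ω h1 h2 => by
        have := h1.2.1.symm.trans h2.2.1; norm_num at this)
    · exact hA'.inter ((hS (-1)).inter (hSη (-e)))
  have hh1 : P (A ∩ {ω | ξ i ω = 1}) = P A * 2⁻¹ :=
    half_inter P F (i-1) hA (hS 1) (hhalf i hi).1
  have hh2 : P (A ∩ {ω | η i ω = -e}) = P A * 2⁻¹ := by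
    rcases he with h|h <;> subst h
    · exact half_inter P F (i-1) hA (by simpa using hSη (-1)) (hhalf i hi).2.2.2
    · have : {ω | η i ω = -(-1:ℝ)} = {ω | η i ω = 1} := by norm_num
      rw [this]
      exact half_inter P F (i-1) hA (hSη 1) (hhalf i hi).2.2.1
  have heq : P (A ∩ {ω | ξ i ω = 1 ∧ η i ω = e}) + P (A ∩ {ω | ξ i ω = 1 ∧ η i ω = -e})
      = P (A ∩ {ω | ξ i ω = -1 ∧ η i ω = -e}) + P (A ∩ {ω | ξ i ω = 1 ∧ η i ω = -e}) := by
    rw [← hsplit1, hh1, ← hh2, hsplit2, add_comm]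
  exact WithTop.add_right_cancel (measure_ne_top P _) heq

end measureAux


section master
variable {Ω : Type*} [mΩ : MeasurableSpace Ω]

lemma gtop_meas {m : MeasurableSpace Ω} (g : Ω → ℕ∞) (hg0 : ∀ ω, g ω ≠ 0)
    (h : ∀ i : ℕ, 1 ≤ i → MeasurableSet[m] {ω | g ω = (i : ℕ∞)}) :
    MeasurableSet[m] {ω | g ω = ⊤} := by
  have hmeasN : ∀ i : ℕ, MeasurableSet[m] {ω | g ω = (i : ℕ∞)} := by
    intro i
    rcases Nat.eq_zero_or_pos i with h0 | h1
    · subst h0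
      have : {ω | g ω = ((0:ℕ) : ℕ∞)} = ∅ := by
        ext ω; simpa using hg0 ω
      rw [this]; exact MeasurableSet.empty
    · exact h i h1
  have hset : {ω | g ω = ⊤} = (⋃ i : ℕ, {ω | g ω = (i : ℕ∞)})ᶜ := by
    ext ω
    simp only [Set.mem_setOf_eq, Set.mem_compl_iff, Set.mem_iUnion]
    constructor
    · rintro htop ⟨i, hi⟩
      rw [htop] at hi
      exact (ENat.coe_ne_top i) hi.symm
    · intro hno
      by_contra hne
      exact hno ⟨(g ω).toNat, (ENat.coe_toNat hne).symm⟩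
  rw [hset]
  exact (MeasurableSet.iUnion hmeasN).compl

lemma master (P : Measure Ω) [IsProbabilityMeasure P]
    (F : MeasureTheory.Filtration ℕ mΩ)
    (ξ η : ℕ → Ω → ℝ)
    (hξm : ∀ n, 1 ≤ n → Measurable[F n] (ξ n))
    (hηm : ∀ n, 1 ≤ n → Measurable[F n] (η n))
    (hξv : ∀ n ω, ξ n ω = 1 ∨ ξ n ω = -1)
    (hηv : ∀ n ω, η n ω = 1 ∨ η n ω = -1)
    (hhalf : ∀ n, 1 ≤ n →
      (P[({ω | ξ n ω = 1}).indicator (fun _ => (1 : ℝ)) | F (n - 1)] =ᵐ[P] fun _ => 1 / 2) ∧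
      (P[({ω | ξ n ω = -1}).indicator (fun _ => (1 : ℝ)) | F (n - 1)] =ᵐ[P] fun _ => 1 / 2) ∧
      (P[({ω | η n ω = 1}).indicator (fun _ => (1 : ℝ)) | F (n - 1)] =ᵐ[P] fun _ => 1 / 2) ∧
      (P[({ω | η n ω = -1}).indicator (fun _ => (1 : ℝ)) | F (n - 1)] =ᵐ[P] fun _ => 1 / 2))
    (e : ℝ) (he : e = 1 ∨ e = -1)
    (g : Ω → ℕ∞) (A : ℕ → Set Ω)
    (hA : ∀ i, 1 ≤ i → MeasurableSet[F (i-1)] (A i))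
    (hg0 : ∀ ω, g ω ≠ 0)
    (hchar : ∀ i : ℕ, 1 ≤ i → ∀ ω, (g ω = (i : ℕ∞) ↔ ω ∈ A i ∧ η i ω = e * ξ i ω))
    (W X : Ω → ℝ) (hW : Measurable W)
    (hWind : ∀ c : ℝ, P ({ω | g ω = ⊤} ∩ {ω | W ω = c}) = P {ω | g ω = ⊤} * P {ω | W ω = c})
    (hWd : P {ω | W ω = 1} = 2⁻¹ ∧ P {ω | W ω = -1} = 2⁻¹)
    (hX : ∀ ω (i : ℕ), g ω = (i : ℕ∞) → X ω = ξ i ω)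
    (hXtop : ∀ ω, g ω = ⊤ → X ω = W ω) :
    P {ω | X ω = 1} = 2⁻¹ ∧ P {ω | X ω = -1} = 2⁻¹ := by
  classical
  -- the sets {g = i} for finite i
  have hgset : ∀ i : ℕ, 1 ≤ i →
      {ω | g ω = (i : ℕ∞)} = A i ∩ {ω | η i ω = e * ξ i ω} := by
    intro i hi
    ext ω
    exact hchar i hi ω
  have hg0set : {ω | g ω = ((0:ℕ) : ℕ∞)} = ∅ := by
    ext ω; simpa using hg0 ω
  have hgmeasN : ∀ i : ℕ, MeasurableSet {ω | g ω = (i : ℕ∞)} := by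
    intro i
    rcases Nat.eq_zero_or_pos i with h0 | h1
    · subst h0; rw [hg0set]; exact MeasurableSet.empty
    · rw [hgset i h1]
      exact ((F.le (i-1)) _ (hA i h1)).inter
        (measurableSet_eq_fun ((hηm i h1).mono (F.le i) le_rfl)
          (((hξm i h1).mono (F.le i) le_rfl).const_mul e))
  have hgtop : MeasurableSet {ω | g ω = ⊤} :=
    gtop_meas g hg0 (fun i hi => hgmeasN i)
  have hgmeas : ∀ j : ℕ∞, MeasurableSet {ω | g ω = j} := by
    intro j
    by_cases hj : j = ⊤
    · subst hj; exact hgtop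
    · have : j = ((j.toNat : ℕ) : ℕ∞) := (ENat.coe_toNat hj).symm
      rw [this]; exact hgmeasN j.toNat
  have hcases : ∀ ω, g ω = ⊤ ∨ ∃ i : ℕ, g ω = (i : ℕ∞) := by
    intro ω
    rcases eq_or_ne (g ω) ⊤ with h | h
    · exact Or.inl h
    · exact Or.inr ⟨(g ω).toNat, (ENat.coe_toNat h).symm⟩
  -- the partition family
  set good : ℝ → ℕ∞ → Set Ω := fun c j =>
    if j = ⊤ then {ω | g ω = ⊤} ∩ {ω | W ω = c}
    else {ω | g ω = j} ∩ {ω | ξ j.toNat ω = c} with hgood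
  have hsub : ∀ c j, good c j ⊆ {ω | g ω = j} := by
    intro c j
    by_cases hj : j = ⊤
    · subst hj; simp only [hgood, if_pos rfl]; exact Set.inter_subset_left
    · simp only [hgood, if_neg hj]; exact Set.inter_subset_left
  have hmeas : ∀ c j, MeasurableSet (good c j) := by
    intro c j
    by_cases hj : j = ⊤
    · subst hj
      simp only [hgood, if_pos rfl]
      exact hgtop.inter (hW (measurableSet_singleton c))
    · simp only [hgood, if_neg hj]
      rcases Nat.eq_zero_or_pos j.toNat with h0 | h1
      · have hj0 : j = ((0:ℕ) : ℕ∞) := by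
          rw [← h0]; exact (ENat.coe_toNat hj).symm
        rw [hj0, hg0set, Set.empty_inter]
        exact MeasurableSet.empty
      · exact (hgmeas j).inter
          (((hξm j.toNat h1).mono (F.le j.toNat) le_rfl) (measurableSet_singleton c))
  have hdisj : ∀ c, Pairwise (Function.onFun Disjoint (good c)) := by
    intro c j j' hne
    refine Set.disjoint_left.mpr fun ω h1 h2 => hne ?_
    have e1 := hsub c j h1
    have e2 := hsub c j' h2
    rw [Set.mem_setOf_eq] at e1 e2
    rw [← e1, ← e2]
  have hcover : ∀ c : ℝ, {ω | X ω = c} = ⋃ j, good c j := by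
    intro c
    ext ω
    simp only [Set.mem_setOf_eq, Set.mem_iUnion]
    constructor
    · intro hXc
      rcases hcases ω with h | ⟨i, h⟩
      · refine ⟨⊤, ?_⟩
        simp only [hgood, if_pos rfl]
        exact ⟨h, show W ω = c by rw [← hXtop ω h]; exact hXc⟩
      · refine ⟨(i : ℕ∞), ?_⟩
        have hne : ((i : ℕ∞)) ≠ ⊤ := ENat.coe_ne_top i
        simp only [hgood, if_neg hne]
        refine ⟨h, ?_⟩
        rw [Set.mem_setOf_eq, ENat.toNat_coe, ← hX ω i h]
        exact hXc
    · rintro ⟨j, hj⟩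
      by_cases hjt : j = ⊤
      · subst hjt
        simp only [hgood, if_pos rfl] at hj
        rw [hXtop ω hj.1]
        exact hj.2
      · simp only [hgood, if_neg hjt] at hj
        have : g ω = ((j.toNat : ℕ) : ℕ∞) := by
          rw [ENat.coe_toNat hjt]; exact hj.1
        rw [hX ω j.toNat this]
        exact hj.2
  have hPc : ∀ c : ℝ, P {ω | X ω = c} = ∑' j : ℕ∞, P (good c j) := by
    intro c
    rw [hcover c]
    exact measure_iUnion (hdisj c) (hmeas c)
  -- value at ⊤
  have htopval : ∀ c : ℝ, (P {ω | W ω = c} = 2⁻¹) → P (good c ⊤) = P {ω | g ω = ⊤} * 2⁻¹ := by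
    intro c hc
    simp only [hgood, if_pos rfl]
    rw [hWind c, hc]
  -- termwise equality
  have hterm : ∀ j : ℕ∞, P (good 1 j) = P (good (-1) j) := by
    intro j
    by_cases hjt : j = ⊤
    · subst hjt
      rw [htopval 1 hWd.1, htopval (-1) hWd.2]
    · simp only [hgood, if_neg hjt]
      rcases Nat.eq_zero_or_pos j.toNat with h0 | h1
      · have hj0 : j = ((0:ℕ) : ℕ∞) := by rw [← h0]; exact (ENat.coe_toNat hjt).symm
        rw [hj0, hg0set]
        simp
      · set i := j.toNat with hidef
        have hji : j = ((i : ℕ) : ℕ∞) := (ENat.coe_toNat hjt).symm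
        have hset1 : {ω | g ω = j} ∩ {ω | ξ i ω = 1} =
            A i ∩ {ω | ξ i ω = 1 ∧ η i ω = e} := by
          rw [hji, hgset i h1]
          ext ω
          simp only [Set.mem_inter_iff, Set.mem_setOf_eq]
          constructor
          · rintro ⟨⟨ha, hh⟩, hx⟩
            exact ⟨ha, hx, by rw [hh, hx, mul_one]⟩
          · rintro ⟨ha, hx, hh⟩
            exact ⟨⟨ha, by rw [hh, hx, mul_one]⟩, hx⟩
        have hset2 : {ω | g ω = j} ∩ {ω | ξ i ω = -1} =
            A i ∩ {ω | ξ i ω = -1 ∧ η i ω = -e} := by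
          rw [hji, hgset i h1]
          ext ω
          simp only [Set.mem_inter_iff, Set.mem_setOf_eq]
          constructor
          · rintro ⟨⟨ha, hh⟩, hx⟩
            exact ⟨ha, hx, by rw [hh, hx]; ring⟩
          · rintro ⟨ha, hx, hh⟩
            exact ⟨⟨ha, by rw [hh, hx]; ring⟩, hx⟩
        rw [hset1, hset2]
        exact key_eq P F ξ η hξm hηm hξv hηv hhalf i h1 (hA i h1) e he
  -- sum of the two values
  have hsum : ∀ j : ℕ∞, P (good 1 j) + P (good (-1) j) = P {ω | g ω = j} := by
    intro j
    by_cases hjt : j = ⊤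
    · subst hjt
      rw [htopval 1 hWd.1, htopval (-1) hWd.2, ← mul_add]
      have h2 : (2⁻¹ : ENNReal) + 2⁻¹ = 1 := by
        rw [← one_div, ENNReal.add_halves]
      rw [h2, mul_one]
    · simp only [hgood, if_neg hjt]
      rcases Nat.eq_zero_or_pos j.toNat with h0 | h1
      · have hj0 : j = ((0:ℕ) : ℕ∞) := by rw [← h0]; exact (ENat.coe_toNat hjt).symm
        rw [hj0, hg0set]
        simp
      · set i := j.toNat with hidef
        have hu : ({ω | g ω = j} ∩ {ω | ξ i ω = 1}) ∪ ({ω | g ω = j} ∩ {ω | ξ i ω = -1})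
            = {ω | g ω = j} := by
          ext ω
          simp only [Set.mem_union, Set.mem_inter_iff, Set.mem_setOf_eq]
          constructor
          · rintro (⟨h, _⟩|⟨h, _⟩) <;> exact h
          · intro h
            rcases hξv i ω with hx|hx
            · exact Or.inl ⟨h, hx⟩
            · exact Or.inr ⟨h, hx⟩
        rw [← measure_union, hu]
        · refine Set.disjoint_left.mpr fun ω h1' h2' => ?_
          have := h1'.2.symm.trans h2'.2
          norm_num at this
        · exact (hgmeas j).inter
            (((hξm i h1).mono (F.le i) le_rfl) (measurableSet_singleton (-1)))
  -- total mass one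
  have htotal : P {ω | X ω = 1} + P {ω | X ω = -1} = 1 := by
    rw [hPc 1, hPc (-1), ← ENNReal.tsum_add, tsum_congr hsum]
    have hU : (⋃ j : ℕ∞, {ω | g ω = j}) = Set.univ := by
      ext ω
      simp only [Set.mem_iUnion, Set.mem_setOf_eq, Set.mem_univ, iff_true]
      exact ⟨g ω, rfl⟩
    have hd : Pairwise (Function.onFun Disjoint (fun j : ℕ∞ => {ω | g ω = j})) := by
      intro j j' hne
      refine Set.disjoint_left.mpr fun ω h1' h2' => hne ?_
      rw [Set.mem_setOf_eq] at h1' h2'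
      rw [← h1', ← h2']
    rw [← measure_iUnion hd hgmeas, hU, measure_univ]
  have heqP : P {ω | X ω = 1} = P {ω | X ω = -1} := by
    rw [hPc 1, hPc (-1)]
    exact tsum_congr hterm
  have h2x : 2 * P {ω | X ω = 1} = 1 := by
    rw [two_mul]
    nth_rewrite 2 [heqP]
    exact htotal
  have hx : P {ω | X ω = 1} = 2⁻¹ := by
    have h := (ENNReal.eq_div_iff (two_ne_zero) (ENNReal.ofNat_ne_top)).mpr h2x
    rw [h, one_div]
  exact ⟨hx, heqP ▸ hx⟩

end master


section final
variable {Ω : Type*} [mΩ : MeasurableSpace Ω]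

lemma Qproc_meas (F : MeasureTheory.Filtration ℕ mΩ) (ξ η : ℕ → Ω → ℝ)
    (hξm : ∀ n, 1 ≤ n → Measurable[F n] (ξ n))
    (hηm : ∀ n, 1 ≤ n → Measurable[F n] (η n))
    (k : ℕ) (hk : 1 ≤ k) : Measurable[F k] (Qproc ξ η k) := by
  have h : MeasurableSet[F k] {ω | ξ k ω = η k ω} :=
    measurableSet_eq_fun (hξm k hk) (hηm k hk)
  exact Measurable.ite h measurable_const measurable_const

lemma Tproc_meas (F : MeasureTheory.Filtration ℕ mΩ) (ξ η : ℕ → Ω → ℝ)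
    (hξm : ∀ n, 1 ≤ n → Measurable[F n] (ξ n))
    (hηm : ∀ n, 1 ≤ n → Measurable[F n] (η n))
    (i : ℕ) : Measurable[F i] (Tproc ξ η i) := by
  have : (Tproc ξ η i) = fun ω => ∑ k ∈ Finset.Icc 1 i, Qproc ξ η k ω := rfl
  rw [this]
  refine Finset.measurable_sum _ fun k hk => ?_
  rw [Finset.mem_Icc] at hk
  exact (Qproc_meas F ξ η hξm hηm k hk.1).mono (F.mono hk.2) le_rfl

lemma Sproc_meas (F : MeasureTheory.Filtration ℕ mΩ) (ξ η : ℕ → Ω → ℝ)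
    (hξm : ∀ n, 1 ≤ n → Measurable[F n] (ξ n))
    (hηm : ∀ n, 1 ≤ n → Measurable[F n] (η n))
    (i : ℕ) : Measurable[F i] (Sproc ξ η i) := by
  have : (Sproc ξ η i) = fun ω => i - Tproc ξ η i ω := rfl
  rw [this]
  exact Measurable.sub measurable_const (Tproc_meas F ξ η hξm hηm i)

lemma neq_iff_neg {a b : ℝ} (ha : a = 1 ∨ a = -1) (hb : b = 1 ∨ b = -1) :
    a ≠ b ↔ b = -1 * a := by
  rcases ha with h|h <;> rcases hb with h'|h' <;> subst h <;> subst h' <;> norm_num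

end final

theorem stmt_5
    {Ω : Type*} [mΩ : MeasurableSpace Ω] (P : Measure Ω) [IsProbabilityMeasure P]
    (F : MeasureTheory.Filtration ℕ mΩ) (hF0 : F 0 = ⊥)
    (ξ η : ℕ → Ω → ℝ)
    (hξm : ∀ n, 1 ≤ n → Measurable[F n] (ξ n))
    (hηm : ∀ n, 1 ≤ n → Measurable[F n] (η n))
    (hξv : ∀ n ω, ξ n ω = 1 ∨ ξ n ω = -1)
    (hηv : ∀ n ω, η n ω = 1 ∨ η n ω = -1)
    (hhalf : ∀ n, 1 ≤ n →
      (P[({ω | ξ n ω = 1}).indicator (fun _ => (1 : ℝ)) | F (n - 1)] =ᵐ[P] fun _ => 1 / 2) ∧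
      (P[({ω | ξ n ω = -1}).indicator (fun _ => (1 : ℝ)) | F (n - 1)] =ᵐ[P] fun _ => 1 / 2) ∧
      (P[({ω | η n ω = 1}).indicator (fun _ => (1 : ℝ)) | F (n - 1)] =ᵐ[P] fun _ => 1 / 2) ∧
      (P[({ω | η n ω = -1}).indicator (fun _ => (1 : ℝ)) | F (n - 1)] =ᵐ[P] fun _ => 1 / 2))
    (ζ ψ : ℕ → Ω → ℝ)
    (hζm : ∀ n, Measurable (ζ n)) (hψm : ∀ n, Measurable (ψ n))
    (hζd : ∀ n, P {ω | ζ n ω = 1} = 2⁻¹ ∧ P {ω | ζ n ω = -1} = 2⁻¹)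
    (hψd : ∀ n, P {ω | ψ n ω = 1} = 2⁻¹ ∧ P {ω | ψ n ω = -1} = 2⁻¹)
    (hindep : iIndep (fun i : ℕ ⊕ ℕ ⊕ Unit =>
      Sum.elim (fun n => MeasurableSpace.comap (ζ n) inferInstance)
        (Sum.elim (fun n => MeasurableSpace.comap (ψ n) inferInstance)
          (fun _ => ⨆ n, (F n : MeasurableSpace Ω))) i) P) :
    ∀ n m : ℕ, 1 ≤ n → 1 ≤ m →
      P {ω | xiAlpha ξ η ζ n ω = 1} = 2⁻¹ ∧
      P {ω | xiAlpha ξ η ζ n ω = -1} = 2⁻¹ ∧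
      P {ω | xiBeta ξ η ψ m ω = 1} = 2⁻¹ ∧
      P {ω | xiBeta ξ η ψ m ω = -1} = 2⁻¹ := by
  intro n m hn hm
  -- measurability of the hitting-time level sets in `⨆ n, F n`
  have hFle : ∀ k : ℕ, (F k : MeasurableSpace Ω) ≤ ⨆ j, (F j : MeasurableSpace Ω) :=
    fun k => le_iSup (fun j => (F j : MeasurableSpace Ω)) k
  -- independence of ζ n (resp. ψ m) from ⨆ F
  have hIζ : Indep (⨆ j, (F j : MeasurableSpace Ω))
      (MeasurableSpace.comap (ζ n) inferInstance) P :=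
    hindep.indep (i := Sum.inr (Sum.inr ())) (j := Sum.inl n) (by intro h; cases h)
  have hIψ : Indep (⨆ j, (F j : MeasurableSpace Ω))
      (MeasurableSpace.comap (ψ m) inferInstance) P :=
    hindep.indep (i := Sum.inr (Sum.inr ())) (j := Sum.inr (Sum.inl m)) (by intro h; injection h with h'; cases h')
  -- ALPHA part
  have hAα : ∀ i, 1 ≤ i → MeasurableSet[F (i-1)] {ω | Tproc ξ η (i-1) ω = n-1} :=
    fun i _ => (Tproc_meas F ξ η hξm hηm (i-1)) (measurableSet_singleton (n-1))
  have hcharα : ∀ i : ℕ, 1 ≤ i → ∀ ω, (alphaProc ξ η n ω = (i : ℕ∞) ↔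
      ω ∈ {ω | Tproc ξ η (i-1) ω = n-1} ∧ η i ω = 1 * ξ i ω) := by
    intro i hi ω
    rw [alpha_char ξ η n i hn hi ω]
    simp only [Set.mem_setOf_eq, one_mul]
    constructor
    · rintro ⟨h1, h2⟩; exact ⟨h1, h2.symm⟩
    · rintro ⟨h1, h2⟩; exact ⟨h1, h2.symm⟩
  have hg0α : ∀ ω, alphaProc ξ η n ω ≠ 0 := alpha_ne_zero ξ η n
  have htopAs : MeasurableSet[⨆ j, (F j : MeasurableSpace Ω)] {ω | alphaProc ξ η n ω = ⊤} := by
    refine gtop_meas (alphaProc ξ η n) hg0α fun i hi => ?_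
    have hset : {ω | alphaProc ξ η n ω = (i : ℕ∞)} =
        {ω | Tproc ξ η (i-1) ω = n-1} ∩ {ω | η i ω = 1 * ξ i ω} := by
      ext ω; exact hcharα i hi ω
    rw [hset]
    exact ((hFle (i-1)) _ (hAα i hi)).inter ((hFle i) _
      (measurableSet_eq_fun (hηm i hi) ((hξm i hi).const_mul 1)))
  have hWindα : ∀ c : ℝ, P ({ω | alphaProc ξ η n ω = ⊤} ∩ {ω | ζ n ω = c}) =
      P {ω | alphaProc ξ η n ω = ⊤} * P {ω | ζ n ω = c} := by
    intro c
    exact (Indep_iff _ _ _).mp hIζ _ _ htopAs ⟨{c}, measurableSet_singleton c, rfl⟩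
  have hXα : ∀ ω (i : ℕ), alphaProc ξ η n ω = (i : ℕ∞) →
      xiAlpha ξ η ζ n ω = ξ i ω := by
    intro ω i h
    have hne : alphaProc ξ η n ω ≠ ⊤ := by rw [h]; exact ENat.coe_ne_top i
    simp only [xiAlpha]
    rw [if_neg hne, h, ENat.toNat_coe]
  have hXtopα : ∀ ω, alphaProc ξ η n ω = ⊤ → xiAlpha ξ η ζ n ω = ζ n ω := by
    intro ω h
    simp only [xiAlpha, if_pos h]
  obtain ⟨ha1, ha2⟩ := master P F ξ η hξm hηm hξv hηv hhalf 1 (Or.inl rfl)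
    (alphaProc ξ η n) (fun i => {ω | Tproc ξ η (i-1) ω = n-1}) hAα hg0α hcharα
    (ζ n) (xiAlpha ξ η ζ n) (hζm n) hWindα (hζd n) hXα hXtopα
  -- BETA part
  have hAβ : ∀ i, 1 ≤ i → MeasurableSet[F (i-1)] {ω | Sproc ξ η (i-1) ω = m-1} :=
    fun i _ => (Sproc_meas F ξ η hξm hηm (i-1)) (measurableSet_singleton (m-1))
  have hcharβ : ∀ i : ℕ, 1 ≤ i → ∀ ω, (betaProc ξ η m ω = (i : ℕ∞) ↔
      ω ∈ {ω | Sproc ξ η (i-1) ω = m-1} ∧ η i ω = -1 * ξ i ω) := by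
    intro i hi ω
    rw [beta_char ξ η m i hm hi ω]
    simp only [Set.mem_setOf_eq]
    constructor
    · rintro ⟨h1, h2⟩
      exact ⟨h1, (neq_iff_neg (hξv i ω) (hηv i ω)).mp h2⟩
    · rintro ⟨h1, h2⟩
      exact ⟨h1, (neq_iff_neg (hξv i ω) (hηv i ω)).mpr h2⟩
  have hg0β : ∀ ω, betaProc ξ η m ω ≠ 0 := beta_ne_zero ξ η m
  have htopBs : MeasurableSet[⨆ j, (F j : MeasurableSpace Ω)] {ω | betaProc ξ η m ω = ⊤} := by
    refine gtop_meas (betaProc ξ η m) hg0β fun i hi => ?_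
    have hset : {ω | betaProc ξ η m ω = (i : ℕ∞)} =
        {ω | Sproc ξ η (i-1) ω = m-1} ∩ {ω | η i ω = -1 * ξ i ω} := by
      ext ω; exact hcharβ i hi ω
    rw [hset]
    exact ((hFle (i-1)) _ (hAβ i hi)).inter ((hFle i) _
      (measurableSet_eq_fun (hηm i hi) ((hξm i hi).const_mul (-1))))
  have hWindβ : ∀ c : ℝ, P ({ω | betaProc ξ η m ω = ⊤} ∩ {ω | ψ m ω = c}) =
      P {ω | betaProc ξ η m ω = ⊤} * P {ω | ψ m ω = c} := by
    intro c
    exact (Indep_iff _ _ _).mp hIψ _ _ htopBs ⟨{c}, measurableSet_singleton c, rfl⟩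
  have hXβ : ∀ ω (i : ℕ), betaProc ξ η m ω = (i : ℕ∞) →
      xiBeta ξ η ψ m ω = ξ i ω := by
    intro ω i h
    have hne : betaProc ξ η m ω ≠ ⊤ := by rw [h]; exact ENat.coe_ne_top i
    simp only [xiBeta]
    rw [if_neg hne, h, ENat.toNat_coe]
  have hXtopβ : ∀ ω, betaProc ξ η m ω = ⊤ → xiBeta ξ η ψ m ω = ψ m ω := by
    intro ω h
    simp only [xiBeta, if_pos h]
  obtain ⟨hb1, hb2⟩ := master P F ξ η hξm hηm hξv hηv hhalf (-1) (Or.inr rfl)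
    (betaProc ξ η m) (fun i => {ω | Sproc ξ η (i-1) ω = m-1}) hAβ hg0β hcharβ
    (ψ m) (xiBeta ξ η ψ m) (hψm m) hWindβ (hψd m) hXβ hXtopβ
  exact ⟨ha1, ha2, hb1, hb2⟩
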